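/- Let v₁, v₂, v₃, v₄ be trace-zero 2×2 complex matrices, and for indices i₁,…,i_h set r_{i₁⋯i_h} = -tr(v_{i₁}⋯v_{i_h}). Then 2·r_{1234} = r_{13}·r_{24} - r_{12}·r_{34} - r_{14}·r_{23}. -/
import Mathlib


open Matrix

theorem stmt_4 (v₁ v₂ v₃ v₄ : Matrix (Fin 2) (Fin 2) ℂ)
    (h₁ : trace v₁ = 0) (h₂ : trace v₂ = 0) (h₃ : trace v₃ = 0) (h₄ : trace v₄ = 0) :
    2 * (-(trace (v₁ * v₂ * v₃ * v₄))) =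
      (-(trace (v₁ * v₃))) * (-(trace (v₂ * v₄)))
        - (-(trace (v₁ * v₂))) * (-(trace (v₃ * v₄)))
        - (-(trace (v₁ * v₄))) * (-(trace (v₂ * v₃))) := by
  simp only [trace, Matrix.mul_apply, Fin.sum_univ_two, Matrix.diag] at *
  have e1 : v₁ 1 1 = -v₁ 0 0 := by linear_combination h₁
  have e2 : v₂ 1 1 = -v₂ 0 0 := by linear_combination h₂
  have e3 : v₃ 1 1 = -v₃ 0 0 := by linear_combination h₃
  have e4 : v₄ 1 1 = -v₄ 0 0 := by linear_combination h₄
  rw [e1, e2, e3, e4]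
  ring
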